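/- Let V be a finite-dimensional real vector space, let ξ be a bivector (a grade-2 element of the exterior algebra ⋀V), and let m ∈ ℕ. Then ξ^(m+1) = 0 in ⋀V if and only if there exists a subspace W ⊆ V with finrank W ≤ 2m such that ξ lies in ⋀²W. -/

import Mathlib

open ExteriorAlgebra

set_option linter.unusedSectionVars false

open ExteriorAlgebra

namespace SardAux

lemma pairwise_of_forall {α : Type*} {R : α → α → Prop} (h : ∀ a b, R a b) :
    ∀ l : List α, l.Pairwise R
  | [] => List.Pairwise.nil
  | a :: t => List.Pairwise.cons (fun b _ => h a b) (pairwise_of_forall h t)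

variable {A : Type*} [Ring A]

lemma list_sum_pow_succ_eq_zero :
    ∀ l : List A, l.Pairwise Commute → (∀ a ∈ l, a * a = 0) →
      l.sum ^ (l.length + 1) = 0
  | [], _, _ => by simp
  | a :: t, hc, hsq => by
    obtain ⟨hct, hpt⟩ := List.pairwise_cons.mp hc
    have hcomm : Commute a t.sum := Commute.list_sum_right _ _ hct
    have ih := list_sum_pow_succ_eq_zero t hpt fun x hx => hsq x (List.mem_cons_of_mem _ hx)
    have ha : a * a = 0 := hsq a List.mem_cons_self
    rw [List.sum_cons, List.length_cons, hcomm.add_pow]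
    apply Finset.sum_eq_zero
    intro k hk
    match k with
    | 0 =>
      have : t.sum ^ (t.length + 1 + 1 - 0) = 0 := by
        rw [Nat.sub_zero, pow_succ, ih, zero_mul]
      rw [this]; simp
    | 1 =>
      have : t.sum ^ (t.length + 1 + 1 - 1) = 0 := by
        rw [show t.length + 1 + 1 - 1 = t.length + 1 by omega, ih]
      rw [this]; simp
    | (j+2) =>
      have : a ^ (j + 2) = 0 := by
        rw [pow_succ, pow_succ, mul_assoc, ha, mul_zero]
      rw [this]; simp

lemma list_sum_pow_length :
    ∀ l : List A, l.Pairwise Commute → (∀ a ∈ l, a * a = 0) →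
      l.sum ^ l.length = (Nat.factorial l.length) • l.prod
  | [], _, _ => by simp
  | a :: t, hc, hsq => by
    obtain ⟨hct, hpt⟩ := List.pairwise_cons.mp hc
    have hcomm : Commute a t.sum := Commute.list_sum_right _ _ hct
    have ihP := list_sum_pow_length t hpt fun x hx => hsq x (List.mem_cons_of_mem _ hx)
    have ihQ := list_sum_pow_succ_eq_zero t hpt fun x hx => hsq x (List.mem_cons_of_mem _ hx)
    rw [List.sum_cons, List.length_cons, hcomm.add_pow]
    rw [Finset.sum_eq_single 1]
    · rw [pow_one, Nat.add_sub_cancel, ihP, Nat.choose_one_right, List.prod_cons,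
        Nat.factorial_succ]
      rw [mul_smul_comm, smul_mul_assoc]
      rw [mul_smul, nsmul_eq_mul, nsmul_eq_mul, nsmul_eq_mul]
      rw [← mul_assoc]
      exact ((Nat.cast_commute (t.length + 1) ((t.length.factorial : A) * (a * t.prod))).eq).symm
    · intro k hk hne
      match k with
      | 0 =>
        have : t.sum ^ (t.length + 1 - 0) = 0 := by rw [Nat.sub_zero, ihQ]
        rw [this]; simp
      | 1 => exact absurd rfl hne
      | (j+2) =>
        have ha : a * a = 0 := hsq a List.mem_cons_self
        have : a ^ (j + 2) = 0 := by
          rw [pow_succ, pow_succ, mul_assoc, ha, mul_zero]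
        rw [this]; simp
    · intro h
      exact absurd (Finset.mem_range.mpr (by omega)) h

end SardAux

namespace SardAux

variable (V : Type*) [AddCommGroup V] [Module ℝ V]

/-- The span of products of two `ι`'s of elements of `W`. -/
def span2 (W : Submodule ℝ V) : Submodule ℝ (ExteriorAlgebra ℝ V) :=
  Submodule.span ℝ {z : ExteriorAlgebra ℝ V | ∃ w₁ ∈ W, ∃ w₂ ∈ W, z = ι ℝ w₁ * ι ℝ w₂}

lemma ι_mul_swap (x y : V) : ι ℝ x * ι ℝ y = -(ι ℝ y * ι ℝ x) :=
  eq_neg_of_add_eq_zero_left (ι_add_mul_swap x y)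

lemma commute_ι_pair (a c d : V) : Commute (ι ℝ a) (ι ℝ c * ι ℝ d) := by
  show ι ℝ a * (ι ℝ c * ι ℝ d) = (ι ℝ c * ι ℝ d) * ι ℝ a
  rw [← mul_assoc, ι_mul_swap V a c, neg_mul, mul_assoc, ι_mul_swap V a d, mul_neg, neg_neg,
    ← mul_assoc]

lemma commute_pairs (a b c d : V) : Commute (ι ℝ a * ι ℝ b) (ι ℝ c * ι ℝ d) :=
  (commute_ι_pair V a c d).mul_left (commute_ι_pair V b c d)

lemma pair_sq_zero (a b : V) : (ι ℝ a * ι ℝ b) * (ι ℝ a * ι ℝ b) = 0 := by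
  rw [mul_assoc, ← mul_assoc (ι ℝ b), ι_mul_swap V b a]
  simp [mul_assoc, ι_sq_zero]

def flat : List (V × V) → List V
  | [] => []
  | p :: t => p.1 :: p.2 :: flat t

@[simp] lemma flat_nil : flat V [] = [] := rfl
@[simp] lemma flat_cons (p : V × V) (t : List (V × V)) :
    flat V (p :: t) = p.1 :: p.2 :: flat V t := rfl

lemma flat_forall {P : V → Prop} : ∀ {L : List (V × V)},
    (∀ v ∈ flat V L, P v) ↔ ∀ p ∈ L, P p.1 ∧ P p.2 := by
  intro L
  induction L with
  | nil => simp
  | cons p t ih => simp [ih]; tauto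

lemma prod_flat (L : List (V × V)) :
    ((flat V L).map (ι ℝ)).prod = (L.map fun p => ι ℝ p.1 * ι ℝ p.2).prod := by
  induction L with
  | nil => simp
  | cons p t ih => simp [ih, mul_assoc]

lemma length_flat (L : List (V × V)) : (flat V L).length = 2 * L.length := by
  induction L with
  | nil => simp
  | cons p t ih => simp [ih]; omega

lemma prod_map_eq_ιMulti (l : List V) :
    (l.map (ι ℝ)).prod = ιMulti ℝ l.length l.get := by
  rw [ιMulti_apply]
  conv_lhs => rw [← List.ofFn_get l]
  exact congrArg List.prod List.map_ofFn

lemma ιMulti_ne_zero {n : ℕ} {v : Fin n → V} (hv : LinearIndependent ℝ v) :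
    ιMulti ℝ n v ≠ 0 := by
  classical
  set Wv := Submodule.span ℝ (Set.range v) with hWv
  obtain ⟨C, hC⟩ := Submodule.exists_isCompl Wv
  let B := Module.Basis.span hv
  let proj := Wv.linearProjOfIsCompl C hC
  let φ : V →ₗ[ℝ] (Fin n → ℝ) := LinearMap.pi fun i => (B.coord i).comp proj
  let g : V [⋀^Fin n]→ₗ[ℝ] ℝ := (Matrix.detRowAlternating).compLinearMap φ
  have hg : g v = 1 := by
    have hm : (Matrix.of fun i => φ (v i)) = 1 := by
      ext i j
      have hv_mem : v i ∈ Wv := Submodule.subset_span (Set.mem_range_self i)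
      show (B.coord j) (proj (v i)) = (1 : Matrix (Fin n) (Fin n) ℝ) i j
      have h1 : proj (v i) = B i := by
        have h2 : proj ((⟨v i, hv_mem⟩ : Wv) : V) = ⟨v i, hv_mem⟩ :=
          Submodule.linearProjOfIsCompl_apply_left hC _
        have h3 : B i = ⟨v i, hv_mem⟩ := Module.Basis.span_apply hv i
        rw [h3]; exact h2
      rw [h1, Module.Basis.coord_apply, Module.Basis.repr_self]
      simp [Matrix.one_apply, Finsupp.single_apply, eq_comm]
    show Matrix.det (Matrix.of fun i => φ (v i)) = 1
    rw [hm, Matrix.det_one]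
  intro h0
  have hl := liftAlternating_apply_ιMulti (R := ℝ) (M := V) (N := ℝ)
      (Function.update (fun i => (0 : V [⋀^Fin i]→ₗ[ℝ] ℝ)) n g) v
  rw [h0, map_zero] at hl
  rw [Function.update_self] at hl
  rw [hg] at hl
  exact one_ne_zero hl.symm

lemma get_cons (u : V) (l : List V) : (u :: l).get = Fin.cons u l.get := by
  funext i
  refine Fin.cases ?_ (fun j => ?_) i
  · rfl
  · simp [Fin.cons_succ]

lemma indep_cons {U : Submodule ℝ V} {u : V} {l : List V}
    (h : LinearIndependent ℝ l.get) (hl : ∀ v ∈ l, v ∈ U) (hu : u ∉ U) :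
    LinearIndependent ℝ (u :: l).get := by
  rw [get_cons]
  refine h.fin_cons ?_
  intro hmem
  apply hu
  refine Submodule.span_le.mpr ?_ hmem
  rintro _ ⟨i, rfl⟩
  exact hl _ (l.get_mem ..)

end SardAux

namespace SardAux

variable (V : Type*) [AddCommGroup V] [Module ℝ V]

lemma split (v₀ : V) (U W : Submodule ℝ V)
    (hW : ∀ w ∈ W, ∃ c : ℝ, ∃ u ∈ U, w = c • v₀ + u)
    {ξ : ExteriorAlgebra ℝ V} (hξ : ξ ∈ span2 V W) :
    ∃ x ∈ U, ∃ ψ ∈ span2 V U, ξ = ι ℝ v₀ * ι ℝ x + ψ := by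
  set A := Submodule.map ((LinearMap.mulLeft ℝ (ι ℝ v₀)) ∘ₗ (ι ℝ : V →ₗ[ℝ] _)) U with hA
  have hle : span2 V W ≤ A ⊔ span2 V U := by
    rw [span2, Submodule.span_le]
    rintro z ⟨w₁, hw₁, w₂, hw₂, rfl⟩
    obtain ⟨c₁, u₁, hu₁, rfl⟩ := hW w₁ hw₁
    obtain ⟨c₂, u₂, hu₂, rfl⟩ := hW w₂ hw₂
    have key : ι ℝ (c₁ • v₀ + u₁) * ι ℝ (c₂ • v₀ + u₂) =
        ι ℝ v₀ * ι ℝ (c₁ • u₂ - c₂ • u₁) + ι ℝ u₁ * ι ℝ u₂ := by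
      simp only [map_add, map_smul, map_sub, add_mul, mul_add, smul_mul_assoc, mul_smul_comm,
        mul_sub, sub_eq_add_neg, smul_smul, map_neg, smul_neg, neg_smul]
      rw [ι_sq_zero]
      rw [ι_mul_swap V u₁ v₀]
      simp only [mul_neg, mul_smul_comm, smul_zero, smul_neg, neg_neg]
      module
    rw [SetLike.mem_coe, key]
    refine Submodule.add_mem _ (Submodule.mem_sup_left ?_) (Submodule.mem_sup_right
      (Submodule.subset_span ⟨u₁, hu₁, u₂, hu₂, rfl⟩))
    exact ⟨c₁ • u₂ - c₂ • u₁, sub_mem (U.smul_mem _ hu₂) (U.smul_mem _ hu₁), rfl⟩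
  obtain ⟨y, hy, z, hz, rfl⟩ := Submodule.mem_sup.mp (hle hξ)
  obtain ⟨x, hx, rfl⟩ := hy
  exact ⟨x, hx, z, hz, rfl⟩

variable [FiniteDimensional ℝ V]

lemma darboux : ∀ (d : ℕ) (W : Submodule ℝ V), Module.finrank ℝ W ≤ d →
    ∀ {ξ : ExteriorAlgebra ℝ V}, ξ ∈ span2 V W →
    ∃ L : List (V × V), ξ = (L.map fun p => ι ℝ p.1 * ι ℝ p.2).sum ∧
      (∀ v ∈ flat V L, v ∈ W) ∧ LinearIndependent ℝ (flat V L).get := by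
  intro d
  induction d with
  | zero =>
    intro W hW ξ hξ
    have hWbot : W = ⊥ := Submodule.finrank_eq_zero.mp (Nat.le_zero.mp hW)
    subst hWbot
    have hz : ξ = 0 := by
      have hb : span2 V ⊥ ≤ ⊥ := by
        rw [span2, Submodule.span_le]
        rintro z ⟨w₁, hw₁, w₂, hw₂, rfl⟩
        rw [Submodule.mem_bot] at hw₁
        subst hw₁
        simp
      simpa using hb hξ
    refine ⟨[], by simp [hz], by simp, ?_⟩
    haveI : IsEmpty (Fin (flat V ([] : List (V × V))).length) :=
      ⟨fun i => absurd i.2 (by simp)⟩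
    exact linearIndependent_empty_type
  | succ d ih =>
    intro W hW ξ hξ
    classical
    by_cases hle : Module.finrank ℝ W ≤ d
    · exact ih W hle hξ
    have hrank : Module.finrank ℝ W = d + 1 := by omega
    let b := Module.finBasisOfFinrankEq ℝ W hrank
    set cb : Fin (d+1) → V := fun i => (b i : V) with hcbdef
    have hcb : LinearIndependent ℝ cb :=
      b.linearIndependent.map' W.subtype (Submodule.ker_subtype W)
    set v₀ := cb 0 with hv₀def
    set U := Submodule.span ℝ (Set.range fun i : Fin d => cb i.succ) with hUdef
    have hUW : U ≤ W := Submodule.span_le.mpr (by rintro _ ⟨i, rfl⟩; exact (b i.succ).2)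
    have hv₀W : v₀ ∈ W := (b 0).2
    have hv₀U : v₀ ∉ U := by
      have himg : U = Submodule.span ℝ (cb '' {i | i ≠ 0}) := by
        rw [hUdef]
        congr 1
        ext z
        constructor
        · rintro ⟨i, rfl⟩; exact ⟨i.succ, Fin.succ_ne_zero i, rfl⟩
        · rintro ⟨j, hj, rfl⟩
          rcases Fin.eq_zero_or_eq_succ j with h0 | ⟨i, rfl⟩
          · exact absurd h0 hj
          · exact ⟨i, rfl⟩
      rw [himg]
      exact hcb.notMem_span_image (by simp)
    have hUrank : Module.finrank ℝ U ≤ d := by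
      have h1 := finrank_span_le_card (R := ℝ) (Set.range fun i : Fin d => cb i.succ)
      refine le_trans h1 ?_
      rw [Set.toFinset_range]
      exact le_trans (Finset.card_image_le) (by simp)
    have hdecomp : ∀ w ∈ W, ∃ c : ℝ, ∃ u ∈ U, w = c • v₀ + u := by
      intro w hw
      refine ⟨b.repr ⟨w, hw⟩ 0, ∑ i : Fin d, b.repr ⟨w, hw⟩ i.succ • cb i.succ, ?_, ?_⟩
      · exact Submodule.sum_mem _ fun i _ =>
          Submodule.smul_mem _ _ (Submodule.subset_span ⟨i, rfl⟩)
      · have hw' : w = ∑ i : Fin (d+1), b.repr ⟨w, hw⟩ i • cb i := by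
          calc w = ((⟨w, hw⟩ : W) : V) := rfl
          _ = ((∑ i, b.repr ⟨w, hw⟩ i • b i : W) : V) := by rw [b.sum_repr ⟨w, hw⟩]
          _ = ∑ i, b.repr ⟨w, hw⟩ i • cb i := by
              rw [Submodule.coe_sum]
              simp [hcbdef]
        conv_lhs => rw [hw']
        rw [Fin.sum_univ_succ]
    obtain ⟨x, hxU, ψ, hψ, hξ'⟩ := split V v₀ U W hdecomp hξ
    by_cases hx0 : x = 0
    · obtain ⟨L, hsum, hmem, hind⟩ := ih U hUrank hψ
      refine ⟨L, ?_, fun v hv => hUW (hmem v hv), hind⟩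
      rw [hξ', hx0]
      simp [hsum]
    · set X := Submodule.span ℝ ({x} : Set V) with hX
      obtain ⟨C, hC⟩ := Submodule.exists_isCompl X
      set U' := C ⊓ U with hU'
      have hXU : X ≤ U := by rw [hX, Submodule.span_le, Set.singleton_subset_iff]; exact hxU
      have hsupU : X ⊔ U' = U := by
        have hm := sup_inf_assoc_of_le C hXU
        rw [hC.sup_eq_top, top_inf_eq] at hm
        exact hm.symm
      have hU'U : U' ≤ U := inf_le_right
      have hxU' : x ∉ U' := by
        intro h
        apply hx0
        have hmem2 : x ∈ X ⊓ C := ⟨Submodule.mem_span_singleton_self x, h.1⟩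
        rw [hC.inf_eq_bot] at hmem2
        simpa using hmem2
      have hdecompU : ∀ u ∈ U, ∃ c : ℝ, ∃ u' ∈ U', u = c • x + u' := by
        intro u hu
        rw [← hsupU] at hu
        obtain ⟨s, hs, u', hu', rfl⟩ := Submodule.mem_sup.mp hu
        obtain ⟨c, rfl⟩ := Submodule.mem_span_singleton.mp hs
        exact ⟨c, u', hu', rfl⟩
      have hU'rank : Module.finrank ℝ U' ≤ d := le_trans (Submodule.finrank_mono hU'U) hUrank
      obtain ⟨y, hyU', ψ', hψ', hψeq⟩ := split V x U' U hdecompU hψ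
      obtain ⟨L', hsum', hmem', hind'⟩ := ih U' hU'rank hψ'
      have hmemU : ∀ v ∈ x :: flat V L', v ∈ U := by
        intro v hv
        rcases List.mem_cons.mp hv with rfl | hv
        · exact hxU
        · exact hU'U (hmem' v hv)
      refine ⟨(v₀ - y, x) :: L', ?_, ?_, ?_⟩
      · rw [List.map_cons, List.sum_cons, ← hsum']
        have hkey : ι ℝ (v₀ - y) * ι ℝ x = ι ℝ v₀ * ι ℝ x + ι ℝ x * ι ℝ y := by
          rw [map_sub, sub_mul, ι_mul_swap V y x, sub_neg_eq_add]
        rw [hξ', hψeq, hkey]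
        abel
      · intro v hv
        rw [flat_cons] at hv
        rcases List.mem_cons.mp hv with rfl | hv
        · exact sub_mem hv₀W (hUW (hU'U hyU'))
        · exact hUW (hmemU v hv)
      · rw [flat_cons]
        have h1 : LinearIndependent ℝ (x :: flat V L').get :=
          indep_cons V hind' (fun v hv => hmem' v hv) hxU'
        refine indep_cons V h1 hmemU ?_
        intro hmem3
        apply hv₀U
        have : v₀ = (v₀ - y) + y := by abel
        rw [this]
        exact Submodule.add_mem _ hmem3 (hU'U hyU')

end SardAux

namespace SardAux

variable (V : Type*) [AddCommGroup V] [Module ℝ V]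

lemma nzsd : NoZeroSMulDivisors ℝ (ExteriorAlgebra ℝ V) := by
  constructor
  intro c x h
  by_cases hc : c = 0
  · exact Or.inl hc
  · right
    have h2 := congrArg (fun y => c⁻¹ • y) h
    simpa [smul_smul, inv_mul_cancel₀ hc] using h2

lemma pow_mem (W : Submodule ℝ V) {ξ : ExteriorAlgebra ℝ V} (hξ : ξ ∈ span2 V W) :
    ∀ k : ℕ, ξ ^ k ∈ Submodule.span ℝ
      {z : ExteriorAlgebra ℝ V | ∃ l : List V, l.length = 2 * k ∧ (∀ v ∈ l, v ∈ W) ∧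
        z = (l.map (ι ℝ)).prod}
  | 0 => by
    rw [pow_zero]
    exact Submodule.subset_span ⟨[], by simp, by simp, by simp⟩
  | (k+1) => by
    have h1 := pow_mem W hξ k
    rw [pow_succ]
    have h2 := Submodule.mul_mem_mul h1 hξ
    rw [span2, Submodule.span_mul_span] at h2
    refine Submodule.span_le.mpr ?_ h2
    rintro z ⟨z₁, hz₁, z₂, hz₂, rfl⟩
    obtain ⟨l, hlen, hmem, rfl⟩ := hz₁
    obtain ⟨w₁, hw₁, w₂, hw₂, rfl⟩ := hz₂
    refine Submodule.subset_span ⟨l ++ [w₁, w₂], by simp [hlen]; ring, ?_, ?_⟩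
    · intro v hv
      rcases List.mem_append.mp hv with hv | hv
      · exact hmem v hv
      · rcases List.mem_cons.mp hv with rfl | hv2
        · exact hw₁
        · rw [List.mem_singleton] at hv2; subst hv2; exact hw₂
    · simp [List.map_append, mul_assoc]

variable [FiniteDimensional ℝ V]

lemma backward (W : Submodule ℝ V) (m : ℕ) (hrank : Module.finrank ℝ W ≤ 2 * m)
    {ξ : ExteriorAlgebra ℝ V} (hξ : ξ ∈ span2 V W) : ξ ^ (m + 1) = 0 := by
  have h1 := pow_mem V W hξ (m + 1)
  have h2 : {z : ExteriorAlgebra ℝ V | ∃ l : List V, l.length = 2 * (m+1) ∧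
      (∀ v ∈ l, v ∈ W) ∧ z = (l.map (ι ℝ)).prod} ⊆ {(0 : ExteriorAlgebra ℝ V)} := by
    rintro z ⟨l, hlen, hmem, rfl⟩
    have hdep : ¬ LinearIndependent ℝ l.get := by
      intro h
      let v' : Fin l.length → W := fun i => ⟨l.get i, hmem _ (l.get_mem i)⟩
      have hv' : LinearIndependent ℝ v' := by
        have : l.get = W.subtype ∘ v' := rfl
        rw [this] at h
        exact h.of_comp W.subtype
      have := hv'.fintype_card_le_finrank
      rw [Fintype.card_fin] at this
      omega
    haveI := nzsd V
    rw [prod_map_eq_ιMulti]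
    simp [AlternatingMap.map_linearDependent _ _ hdep]
  have h3 : ξ ^ (m+1) ∈ (⊥ : Submodule ℝ (ExteriorAlgebra ℝ V)) := by
    refine Submodule.span_le.mpr ?_ h1
    intro z hz
    rcases h2 hz with rfl
    exact Submodule.zero_mem _
  simpa using h3

end SardAux

open SardAux

/-- Characterization of the rank of a bivector by vanishing of wedge powers: a grade-2
element `ξ` of the exterior algebra satisfies `ξ^(m+1) = 0` if and only if `ξ` lies in
`⋀²W` (the submodule spanned by products `ι w₁ * ι w₂` with `w₁, w₂ ∈ W`) for some subspace
`W` of dimension at most `2m`. -/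
theorem sard_bivector_rank (V : Type*) [AddCommGroup V] [Module ℝ V]
    [FiniteDimensional ℝ V]
    (ξ : ExteriorAlgebra ℝ V) (hξ : ξ ∈ ⋀[ℝ]^2 V) (m : ℕ) :
    ξ ^ (m + 1) = 0 ↔
      ∃ W : Submodule ℝ V, Module.finrank ℝ W ≤ 2 * m ∧
        ξ ∈ Submodule.span ℝ
          {z : ExteriorAlgebra ℝ V | ∃ w₁ ∈ W, ∃ w₂ ∈ W, z = ι ℝ w₁ * ι ℝ w₂} := by
  classical
  constructor
  · intro hpow
    have hξ' : ξ ∈ span2 V ⊤ := by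
      rw [← ιMulti_span_fixedDegree ℝ 2 (M := V)] at hξ
      refine Submodule.span_le.mpr ?_ hξ
      rintro z ⟨v, rfl⟩
      refine Submodule.subset_span ⟨v 0, trivial, v 1, trivial, ?_⟩
      rw [ιMulti_apply]
      simp [List.ofFn_succ]
    obtain ⟨L, hsum, hmem, hind⟩ :=
      darboux V (Module.finrank ℝ V) ⊤ (le_of_eq (finrank_top ℝ V)) hξ'
    set r := L.length with hr
    have hpair : (L.map fun p => ι ℝ p.1 * ι ℝ p.2).Pairwise Commute :=
      List.pairwise_map.mpr (pairwise_of_forall (fun p q => commute_pairs V p.1 p.2 q.1 q.2) L)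
    have hsq : ∀ z ∈ L.map fun p => ι ℝ p.1 * ι ℝ p.2, z * z = 0 := by
      rintro z hz
      obtain ⟨p, hp, rfl⟩ := List.mem_map.mp hz
      exact pair_sq_zero V p.1 p.2
    have hpowr : ξ ^ r = (Nat.factorial r) • ((flat V L).map (ι ℝ)).prod := by
      calc ξ ^ r = (L.map fun p => ι ℝ p.1 * ι ℝ p.2).sum ^
          (L.map fun p => ι ℝ p.1 * ι ℝ p.2).length := by rw [← hsum, List.length_map]
      _ = (Nat.factorial (L.map fun p => ι ℝ p.1 * ι ℝ p.2).length) •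
          (L.map fun p => ι ℝ p.1 * ι ℝ p.2).prod := list_sum_pow_length _ hpair hsq
      _ = (Nat.factorial r) • ((flat V L).map (ι ℝ)).prod := by
          rw [List.length_map, prod_flat]
    have hne : ξ ^ r ≠ 0 := by
      haveI := nzsd V
      rw [hpowr, prod_map_eq_ιMulti]
      intro h
      have h2 : ((Nat.factorial r : ℝ)) • ιMulti ℝ _ (flat V L).get = 0 := by
        rw [Nat.cast_smul_eq_nsmul]; exact h
      rcases smul_eq_zero.mp h2 with h3 | h3
      · exact Nat.cast_ne_zero.mpr (Nat.factorial_ne_zero r) h3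
      · exact ιMulti_ne_zero V hind h3
    have hrm : r ≤ m := by
      by_contra hgt
      push_neg at hgt
      apply hne
      obtain ⟨j, hj⟩ : ∃ j, r = (m + 1) + j := ⟨r - (m + 1), by omega⟩
      rw [hj, pow_add, hpow, zero_mul]
    refine ⟨Submodule.span ℝ ((flat V L).toFinset : Set V), ?_, ?_⟩
    · refine le_trans (finrank_span_finset_le_card _) ?_
      refine le_trans (List.toFinset_card_le _) ?_
      rw [length_flat]; omega
    · rw [hsum]
      refine list_sum_mem ?_
      intro z hz
      obtain ⟨p, hp, rfl⟩ := List.mem_map.mp hz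
      have h1 : p.1 ∈ flat V L ∧ p.2 ∈ flat V L :=
        (flat_forall V (P := fun v => v ∈ flat V L)).mp (fun v hv => hv) p hp
      refine Submodule.subset_span ⟨p.1, Submodule.subset_span ?_, p.2,
        Submodule.subset_span ?_, rfl⟩
      · simpa using h1.1
      · simpa using h1.2
  · rintro ⟨W, hrank, hmem⟩
    exact backward V W m hrank hmem
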